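/- The cone S^n_+ + span(S) is closed if and only if S is the zero matrix or S is positive definite, for S ∈ S^n_+. -/

import Mathlib

open Matrix Filter Topology


lemma contQF {n : ℕ} (x : Fin n → ℝ) :
    Continuous (fun X : Matrix (Fin n) (Fin n) ℝ => x ⬝ᵥ X *ᵥ x) := by
  simp only [dotProduct, mulVec, dotProduct]
  fun_prop

lemma contQF2 {n : ℕ} (S : Matrix (Fin n) (Fin n) ℝ) :
    Continuous (fun x : Fin n → ℝ => x ⬝ᵥ S *ᵥ x) := by
  simp only [dotProduct, mulVec, dotProduct]
  fun_prop

lemma isClosedPSD {n : ℕ} : IsClosed {X : Matrix (Fin n) (Fin n) ℝ | X.PosSemidef} := by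
  have : {X : Matrix (Fin n) (Fin n) ℝ | X.PosSemidef} =
      {X | Xᵀ = X} ∩ ⋂ x : Fin n → ℝ, {X | 0 ≤ x ⬝ᵥ X *ᵥ x} := by
    ext X
    simp only [Set.mem_setOf_eq, Set.mem_inter_iff, Set.mem_iInter, posSemidef_iff_dotProduct_mulVec, IsHermitian,
      conjTranspose_eq_transpose_of_trivial, star_trivial, RCLike.star_def, Matrix.map_id]
  rw [this]
  refine IsClosed.inter (isClosed_eq ?_ continuous_id) ?_
  · exact Continuous.matrix_transpose continuous_id
  refine isClosed_iInter fun x => ?_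
  exact isClosed_le continuous_const (contQF x)



lemma psd_smul {n : ℕ} {Y : Matrix (Fin n) (Fin n) ℝ} (hY : Y.PosSemidef) {c : ℝ}
    (hc : 0 ≤ c) : (c • Y).PosSemidef := by
  refine posSemidef_iff_dotProduct_mulVec.mpr ⟨?_, fun x => ?_⟩
  · rw [IsHermitian, conjTranspose_smul, hY.1]; simp
  · rw [smul_mulVec, dotProduct_smul, smul_eq_mul]
    exact mul_nonneg hc (hY.dotProduct_mulVec_nonneg x)

lemma quad_smul {n : ℕ} (M : Matrix (Fin n) (Fin n) ℝ) (c : ℝ) (y : Fin n → ℝ) :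
    (c • y) ⬝ᵥ M *ᵥ (c • y) = c^2 * (y ⬝ᵥ M *ᵥ y) := by
  rw [mulVec_smul, dotProduct_smul, smul_dotProduct, smul_eq_mul, smul_eq_mul]
  ring

lemma exists_shift {n : ℕ} (S : Matrix (Fin n) (Fin n) ℝ) (hSd : S.PosDef)
    (X : Matrix (Fin n) (Fin n) ℝ) (hX : X.IsHermitian) :
    ∃ β : ℝ, (X + β • S).PosSemidef := by
  rcases Nat.eq_zero_or_pos n with hn | hn
  · subst hn
    exact ⟨0, posSemidef_iff_dotProduct_mulVec.mpr ⟨hX.add (psd_smul hSd.posSemidef (le_refl 0)).1, fun x => by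
      simp [dotProduct]⟩⟩
  · have : Nontrivial (Fin n → ℝ) := by
      have : Nonempty (Fin n) := ⟨⟨0, hn⟩⟩
      infer_instance
    have hsph : (Metric.sphere (0 : Fin n → ℝ) 1).Nonempty :=
      NormedSpace.sphere_nonempty.2 zero_le_one
    have hcomp : IsCompact (Metric.sphere (0 : Fin n → ℝ) 1) := isCompact_sphere 0 1
    obtain ⟨yS, hySmem, hyS⟩ := hcomp.exists_isMinOn hsph (contQF2 S).continuousOn
    obtain ⟨yX, hyXmem, hyX⟩ := hcomp.exists_isMinOn hsph (contQF2 X).continuousOn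
    set mS := yS ⬝ᵥ S *ᵥ yS with hmS
    set mX := yX ⬝ᵥ X *ᵥ yX with hmX
    have hmSpos : 0 < mS := by
      refine lt_of_lt_of_eq (hSd.dotProduct_mulVec_pos (x := yS) ?_) (by simp [hmS])
      intro h
      rw [h] at hySmem
      simp at hySmem
    set β := max 0 (-mX / mS) with hβ
    refine ⟨β, posSemidef_iff_dotProduct_mulVec.mpr ⟨?_, ?_⟩⟩
    · exact hX.add (psd_smul hSd.posSemidef (le_max_left 0 _)).1
    · intro x
      rw [star_trivial]
      rcases eq_or_ne x 0 with rfl | hx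
      · simp
      · set c := ‖x‖ with hc
        have hcpos : 0 < c := norm_pos_iff.2 hx
        set y := c⁻¹ • x with hy
        have hxy : x = c • y := by
          rw [hy, smul_smul, mul_inv_cancel₀ hcpos.ne', one_smul]
        have hymem : y ∈ Metric.sphere (0 : Fin n → ℝ) 1 := by
          simp only [hy, mem_sphere_iff_norm, sub_zero, norm_smul, norm_inv, norm_norm]
          rw [Real.norm_eq_abs, abs_of_pos hcpos, inv_mul_cancel₀ hcpos.ne']
        have h1 : mX ≤ y ⬝ᵥ X *ᵥ y := hyX hymem
        have h2 : mS ≤ y ⬝ᵥ S *ᵥ y := hyS hymem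
        have key : 0 ≤ y ⬝ᵥ X *ᵥ y + β * (y ⬝ᵥ S *ᵥ y) := by
          have hb : -mX / mS ≤ β := le_max_right _ _
          have hbnn : 0 ≤ β := le_max_left _ _
          have h3 : 0 ≤ y ⬝ᵥ S *ᵥ y := le_of_lt (lt_of_lt_of_le hmSpos h2)
          nlinarith [div_mul_cancel₀ (-mX) hmSpos.ne', mul_le_mul_of_nonneg_right hb h3]
        have expand : y ⬝ᵥ (X + β • S) *ᵥ y = y ⬝ᵥ X *ᵥ y + β * (y ⬝ᵥ S *ᵥ y) := by
          rw [add_mulVec, dotProduct_add, smul_mulVec, dotProduct_smul, smul_eq_mul]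
        rw [hxy, quad_smul, expand]
        exact mul_nonneg (sq_nonneg c) key


lemma vecMulVec_mulVec' {n : ℕ} (u v w : Fin n → ℝ) :
    vecMulVec u v *ᵥ w = (v ⬝ᵥ w) • u := by
  ext i
  simp [mulVec, vecMulVec_apply, dotProduct, Finset.mul_sum, mul_assoc, mul_comm, mul_left_comm]

lemma quad_vecMulVec {n : ℕ} (u v w : Fin n → ℝ) :
    w ⬝ᵥ vecMulVec u v *ᵥ w = (u ⬝ᵥ w) * (v ⬝ᵥ w) := by
  rw [vecMulVec_mulVec', dotProduct_smul, smul_eq_mul, dotProduct_comm w u, mul_comm]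

lemma psd_cauchy_schwarz {n : ℕ} {S : Matrix (Fin n) (Fin n) ℝ} (hS : S.PosSemidef)
    (z w : Fin n → ℝ) :
    (z ⬝ᵥ S *ᵥ w)^2 ≤ (z ⬝ᵥ S *ᵥ z) * (w ⬝ᵥ S *ᵥ w) := by
  obtain ⟨B, rfl⟩ : ∃ B : Matrix (Fin n) (Fin n) ℝ, S = Bᴴ * B := by
    open MatrixOrder in
    exact CStarAlgebra.nonneg_iff_eq_star_mul_self.mp hS.nonneg
  have key : ∀ a b : Fin n → ℝ, a ⬝ᵥ (Bᴴ * B) *ᵥ b = (B *ᵥ a) ⬝ᵥ (B *ᵥ b) := by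
    intro a b
    rw [← mulVec_mulVec, dotProduct_mulVec, conjTranspose_eq_transpose_of_trivial,
      vecMul_transpose]
  rw [key, key, key]
  have := Finset.sum_mul_sq_le_sq_mul_sq Finset.univ (fun i => (B *ᵥ z) i) (fun i => (B *ᵥ w) i)
  simpa [dotProduct, sq, Finset.mul_sum, Finset.sum_mul] using this

lemma symm_dot {n : ℕ} {S : Matrix (Fin n) (Fin n) ℝ} (hS : S.IsHermitian)
    (a b : Fin n → ℝ) : (S *ᵥ a) ⬝ᵥ b = a ⬝ᵥ S *ᵥ b := by
  rw [dotProduct_mulVec a, ← mulVec_transpose, ← conjTranspose_eq_transpose_of_trivial,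
    hS.eq, dotProduct_comm]

lemma herm_smul {n : ℕ} {Y : Matrix (Fin n) (Fin n) ℝ} (hY : Y.IsHermitian) (c : ℝ) :
    (c • Y).IsHermitian := by
  rw [IsHermitian, conjTranspose_smul, hY.eq]; simp

lemma vecMulVec_herm {n : ℕ} (u v : Fin n → ℝ) :
    (vecMulVec u v + vecMulVec v u).IsHermitian := by
  ext i j
  simp [conjTranspose_apply, vecMulVec_apply, mul_comm, add_comm]

lemma vecMulVec_self_herm {n : ℕ} (v : Fin n → ℝ) : (vecMulVec v v).IsHermitian := by
  ext i j
  simp [conjTranspose_apply, vecMulVec_apply, mul_comm]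

lemma not_closed_aux {n : ℕ} (S : Matrix (Fin n) (Fin n) ℝ) (hS : S.PosSemidef)
    (hS0 : S ≠ 0) (hSd : ¬ S.PosDef) :
    ¬ IsClosed {X : Matrix (Fin n) (Fin n) ℝ |
        ∃ Y : Matrix (Fin n) (Fin n) ℝ, Y.PosSemidef ∧ ∃ α : ℝ, X = Y + α • S} := by
  intro hclosed
  have hz : ∃ z, S *ᵥ z ≠ 0 := by
    by_contra h
    push_neg at h
    apply hS0
    ext i j
    have := congrFun (h (Pi.single j 1)) i
    rw [mulVec_single] at this
    simpa using this
  obtain ⟨z, hzne⟩ := hz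
  have hv : ∃ v, v ≠ 0 ∧ S *ᵥ v = 0 := by
    rw [posDef_iff_dotProduct_mulVec] at hSd
    push_neg at hSd
    obtain ⟨v, hvne, hvle⟩ := hSd hS.1
    refine ⟨v, hvne, ?_⟩
    exact (hS.dotProduct_mulVec_zero_iff v).mp (le_antisymm hvle (hS.dotProduct_mulVec_nonneg v))
  obtain ⟨v, hvne, hvker⟩ := hv
  set u := S *ᵥ z with hu
  set t := z ⬝ᵥ S *ᵥ z with ht
  have htpos : 0 < t := by
    rcases lt_or_eq_of_le (by simpa using hS.dotProduct_mulVec_nonneg z) with h | h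
    · exact h
    · exact absurd ((hS.dotProduct_mulVec_zero_iff z).mp (by simpa using h.symm)) hzne
  set W := vecMulVec u v + vecMulVec v u with hW
  set M := vecMulVec v v with hM
  -- membership of the approximating sequence
  have hmem : ∀ k : ℕ, W + (t/(k+1)) • M ∈ {X : Matrix (Fin n) (Fin n) ℝ |
      ∃ Y, Y.PosSemidef ∧ ∃ α : ℝ, X = Y + α • S} := by
    intro k
    set K : ℝ := (k + 1 : ℝ) with hK
    have hKpos : (0:ℝ) < K := by positivity
    refine ⟨K • S + (W + (t/K) • M), posSemidef_iff_dotProduct_mulVec.mpr ⟨?_, ?_⟩, -K, by module⟩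
    · exact (herm_smul hS.1 K).add ((vecMulVec_herm u v).add
        (herm_smul (vecMulVec_self_herm v) _))
    · intro w
      rw [star_trivial]
      set a := u ⬝ᵥ w with ha
      set b := v ⬝ᵥ w with hb
      set s' := w ⬝ᵥ S *ᵥ w with hs'
      have hform : w ⬝ᵥ (K • S + (W + (t/K) • M)) *ᵥ w
          = K * s' + 2 * (a * b) + (t/K) * b^2 := by
        rw [add_mulVec, add_mulVec, dotProduct_add, dotProduct_add,
          smul_mulVec, dotProduct_smul, smul_mulVec, dotProduct_smul, hW,
          add_mulVec, dotProduct_add, quad_vecMulVec, quad_vecMulVec, hM, quad_vecMulVec,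
          smul_eq_mul, smul_eq_mul]
        simp only [hs', ha, hb]; ring
      rw [hform]
      have hcs : a^2 ≤ t * s' := by
        have := psd_cauchy_schwarz hS z w
        rwa [← symm_dot hS.1 z w, ← hu, ← ha, ← ht, ← hs'] at this
      have hs'nn : 0 ≤ s' := by simpa using hS.dotProduct_mulVec_nonneg w
      have hq : 0 < t/K := div_pos htpos hKpos
      have ha2 : a^2 ≤ (t/K) * (K * s') := by
        have : (t/K) * (K * s') = t * s' := by field_simp
        rw [this]; exact hcs
      nlinarith [sq_nonneg (a + (t/K) * b), hq, ha2]
  -- the limit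
  have htend : Tendsto (fun k : ℕ => W + (t/(k+1)) • M) atTop (𝓝 W) := by
    have h1 : Tendsto (fun k : ℕ => (t/(k+1) : ℝ)) atTop (𝓝 0) := by
      have := tendsto_one_div_add_atTop_nhds_zero_nat.const_mul t
      simpa [div_eq_mul_inv, mul_comm] using this
    have h2 := (h1.smul_const M).const_add W
    simpa using h2
  have hWmem : W ∈ {X : Matrix (Fin n) (Fin n) ℝ |
      ∃ Y, Y.PosSemidef ∧ ∃ α : ℝ, X = Y + α • S} :=
    hclosed.mem_of_tendsto htend (Filter.Eventually.of_forall hmem)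
  -- contradiction
  obtain ⟨Y, hY, α, hWe⟩ := hWmem
  have huv : u ⬝ᵥ v = 0 := by
    rw [hu, symm_dot hS.1 z v, hvker, dotProduct_zero]
  have hWv : W *ᵥ v = (v ⬝ᵥ v) • u := by
    rw [hW, add_mulVec, vecMulVec_mulVec', vecMulVec_mulVec', huv]
    simp
  have hquad : v ⬝ᵥ W *ᵥ v = 0 := by
    rw [hWv, dotProduct_smul, dotProduct_comm v u, huv]
    simp
  have hYv : Y *ᵥ v = 0 := by
    apply (hY.dotProduct_mulVec_zero_iff v).mp
    rw [star_trivial]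
    have hexp : v ⬝ᵥ W *ᵥ v = v ⬝ᵥ Y *ᵥ v + α * (v ⬝ᵥ S *ᵥ v) := by
      rw [hWe, add_mulVec, dotProduct_add, smul_mulVec, dotProduct_smul, smul_eq_mul]
    rw [hvker, dotProduct_zero, mul_zero, add_zero] at hexp
    have := hY.dotProduct_mulVec_nonneg v
    rw [star_trivial] at this
    linarith [hquad ▸ hexp]
  have hWv0 : W *ᵥ v = 0 := by
    rw [hWe, add_mulVec, hYv, smul_mulVec, hvker]
    simp
  rw [hWv] at hWv0
  have hvv : v ⬝ᵥ v ≠ 0 := by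
    intro h
    exact hvne ((dotProduct_self_eq_zero).mp h)
  have : u = 0 := by
    have := congrArg (fun w => (v ⬝ᵥ v)⁻¹ • w) hWv0
    simpa [smul_smul, inv_mul_cancel₀ hvv] using this
  exact hzne (hu ▸ this)


theorem psd_add_span_closed_iff
    {n : ℕ} (S : Matrix (Fin n) (Fin n) ℝ) (hS : S.PosSemidef) :
    IsClosed {X : Matrix (Fin n) (Fin n) ℝ |
        ∃ Y : Matrix (Fin n) (Fin n) ℝ, Y.PosSemidef ∧ ∃ α : ℝ, X = Y + α • S} ↔
      S = 0 ∨ S.PosDef := by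
  constructor
  · intro hclosed
    by_contra h
    push_neg at h
    exact not_closed_aux S hS h.1 h.2 hclosed
  · rintro (rfl | hSd)
    · have hset : {X : Matrix (Fin n) (Fin n) ℝ |
          ∃ Y : Matrix (Fin n) (Fin n) ℝ, Y.PosSemidef ∧ ∃ α : ℝ, X = Y + α • (0 : Matrix (Fin n) (Fin n) ℝ)}
          = {X : Matrix (Fin n) (Fin n) ℝ | X.PosSemidef} := by
        ext X
        simp only [Set.mem_setOf_eq, smul_zero, add_zero]
        constructor
        · rintro ⟨Y, hY, α, rfl⟩; exact hY
        · intro hX; exact ⟨X, hX, 0, rfl⟩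
      rw [hset]
      exact isClosedPSD
    · have hset : {X : Matrix (Fin n) (Fin n) ℝ |
          ∃ Y : Matrix (Fin n) (Fin n) ℝ, Y.PosSemidef ∧ ∃ α : ℝ, X = Y + α • S}
          = {X : Matrix (Fin n) (Fin n) ℝ | Xᴴ = X} := by
        ext X
        simp only [Set.mem_setOf_eq]
        constructor
        · rintro ⟨Y, hY, α, rfl⟩
          rw [conjTranspose_add, hY.1.eq, (herm_smul hS.1 α).eq]
        · intro hX
          obtain ⟨β, hβ⟩ := exists_shift S hSd X hX
          exact ⟨X + β • S, hβ, -β, by module⟩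
      rw [hset]
      exact isClosed_eq (Continuous.matrix_conjTranspose continuous_id) continuous_id
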